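/- Let ‖·‖_X be a norm on ℝ² with B_E ⊆ B_X ⊆ K·B_E, K ≥ 1. The map σ : S_X → S_E, σ(x) = x/‖x‖_E, is a bijection, and it is bi-Lipschitz for the Euclidean induced metrics: for x, y ∈ S_X with angle between them at most arccos(1/K), (1/K²)·‖x−y‖_E ≤ ‖σ(x)−σ(y)‖_E ≤ ‖x−y‖_E. -/

import Mathlib

open Set Real
open scoped RealInnerProductSpace

private lemma core_ineq (K a b t q r : ℝ) (hK : 1 ≤ K) (ha1 : 1 ≤ a) (haK : a ≤ K)
    (hb1 : 1 ≤ b) (hbK : b ≤ K) (hba : b ≤ a) (ht1 : t ≤ 1) (htm : -1 ≤ t)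
    (hq : 0 ≤ q) (hq2 : q ^ 2 = b ^ 2 - 1) (hr : 0 ≤ r) (hr2 : r ^ 2 = 1 - t ^ 2)
    (hd : a * t - b ≤ a * q * r) :
    a ^ 2 + b ^ 2 - 2 * (t * (a * b)) ≤ K ^ 4 * (2 - 2 * t) := by
  have hs0 : 0 ≤ 1 - t := by linarith
  have hd0 : 0 ≤ a - b := by linarith
  have hdD : a - b ≤ a * q * r + a * (1 - t) := by nlinarith
  have ha0 : (0:ℝ) < a := by linarith
  have hb0 : (0:ℝ) < b := by linarith
  have haK2 : a ^ 2 ≤ K ^ 2 := by nlinarith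
  have hbK2 : b ^ 2 ≤ K ^ 2 := by nlinarith
  have hK2 : a ^ 2 ≤ K ^ 4 := by nlinarith [sq_nonneg (K ^ 2 - 1), sq_nonneg K]
  have habK : a ^ 2 * b ^ 2 ≤ K ^ 4 := by nlinarith [sq_nonneg a, sq_nonneg b, sq_nonneg K]
  have main : (a - b) * (a - b) - 2 * a * (a - b) * (1 - t) ≤ 2 * (K ^ 4 - a ^ 2) * (1 - t) := by
    rcases le_or_gt (a - b) (2 * a * (1 - t)) with h | h
    · have h1 : 0 ≤ (a - b) * (2 * a * (1 - t) - (a - b)) :=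
        mul_nonneg hd0 (by linarith)
      have h2 : 0 ≤ 2 * (K ^ 4 - a ^ 2) * (1 - t) := by
        apply mul_nonneg (by linarith) hs0
      linarith [h1, h2]
    · have hD2 : 0 ≤ (a * q * r + a * (1 - t)) + (a - b) - 2 * a * (1 - t) := by linarith
      have h2 : 0 ≤ ((a * q * r + a * (1 - t)) - (a - b)) *
          ((a * q * r + a * (1 - t)) + (a - b) - 2 * a * (1 - t)) :=
        mul_nonneg (by linarith) hD2
      have h4 : a ^ 2 * q ^ 2 * r ^ 2 - a ^ 2 * (1 - t) ^ 2 ≤ 2 * (K ^ 4 - a ^ 2) * (1 - t) := by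
        have he : a ^ 2 * q ^ 2 * r ^ 2 - a ^ 2 * (1 - t) ^ 2
            = (1 - t) * (a ^ 2 * b ^ 2 * (1 + t) - 2 * a ^ 2) := by
          rw [hq2, hr2]; ring
        rw [he]
        have hbb : a ^ 2 * b ^ 2 * (1 + t) - 2 * a ^ 2 ≤ 2 * K ^ 4 - 2 * a ^ 2 := by
          have h6 : 0 ≤ a ^ 2 * b ^ 2 * (1 - t) :=
            mul_nonneg (mul_nonneg (sq_nonneg a) (sq_nonneg b)) hs0
          linarith
        have h7 := mul_le_mul_of_nonneg_left hbb hs0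
        nlinarith [h7]
      nlinarith [h2, h4]
  linarith [main]

private lemma support_est (N : EuclideanSpace ℝ (Fin 2) → ℝ)
    (hN_add : ∀ v w, N (v + w) ≤ N v + N w)
    (hN_smul : ∀ (a : ℝ) (w : EuclideanSpace ℝ (Fin 2)), N (a • w) = |a| * N w)
    (hNE : ∀ w, N w ≤ ‖w‖) (hNneg : ∀ w, 0 ≤ N w)
    (u v : EuclideanSpace ℝ (Fin 2)) (hu : ‖u‖ = 1) (hv : ‖v‖ = 1) :
    N u * ⟪u, v⟫ - Real.sqrt (1 - (N u) ^ 2) * Real.sqrt (1 - ⟪u, v⟫ ^ 2) ≤ N v := by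
  have hu0 : u ≠ 0 := by
    intro h; rw [h, norm_zero] at hu; norm_num at hu
  obtain ⟨g, hg1, hg2⟩ := exists_extension_of_le_sublinear
      (LinearPMap.mkSpanSingleton u (N u) hu0) N
      (fun c hc x => by rw [hN_smul, abs_of_pos hc])
      hN_add
      (by
        rintro ⟨x, hx⟩
        obtain ⟨c, rfl⟩ := Submodule.mem_span_singleton.1 hx
        rw [LinearPMap.mkSpanSingleton'_apply, hN_smul, smul_eq_mul]
        exact mul_le_mul_of_nonneg_right (le_abs_self c) (hNneg u))
  have hgu : g u = N u := by
    have h1 := hg1 ⟨u, Submodule.mem_span_singleton_self u⟩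
    exact h1.trans (LinearPMap.mkSpanSingleton'_apply_self _ _ _ _)
  -- Riesz representation
  set z : EuclideanSpace ℝ (Fin 2) :=
    (InnerProductSpace.toDual ℝ (EuclideanSpace ℝ (Fin 2))).symm
      (LinearMap.toContinuousLinearMap g) with hz
  have hzw : ∀ w, ⟪z, w⟫ = g w := fun w => by
    rw [hz, InnerProductSpace.toDual_symm_apply]; rfl
  have hgle : ∀ w, g w ≤ ‖w‖ := fun w => le_trans (hg2 w) (hNE w)
  have hz1 : ‖z‖ ≤ 1 := by
    have h1 : ‖z‖ ^ 2 = ⟪z, z⟫ := (real_inner_self_eq_norm_sq z).symm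
    have h2 : ⟪z, z⟫ ≤ ‖z‖ := by rw [hzw]; exact hgle z
    nlinarith [norm_nonneg z]
  set A : ℝ := N u with hA
  set t : ℝ := ⟪u, v⟫ with ht
  have hzu : ⟪z, u⟫ = A := by rw [hzw, hgu]
  have ht1 : |t| ≤ 1 := by
    have := abs_real_inner_le_norm u v
    rwa [hu, hv, one_mul] at this
  have hA1 : A ≤ 1 := by rw [hA, ← hu]; exact hNE u
  have hA0 : 0 ≤ A := hNneg u
  -- decomposition estimate
  have hid : ⟪z - A • u, v - t • u⟫ = ⟪z, v⟫ - A * t := by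
    rw [inner_sub_left, inner_sub_right, inner_sub_right, real_inner_smul_left,
      real_inner_smul_left, real_inner_smul_right, real_inner_smul_right, hzu]
    have huu : ⟪u, u⟫ = 1 := by
      rw [real_inner_self_eq_norm_sq, hu]; norm_num
    rw [huu, ← ht]
    ring
  have hA2 : (0:ℝ) ≤ 1 - A ^ 2 := by nlinarith
  have ht2 : (0:ℝ) ≤ 1 - t ^ 2 := by nlinarith [abs_nonneg t, sq_abs t, abs_le.1 ht1]
  have hn1 : ‖z - A • u‖ ≤ Real.sqrt (1 - A ^ 2) := by
    rw [Real.le_sqrt (norm_nonneg _) hA2]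
    have h3 : ‖z - A • u‖ ^ 2 = ‖z‖ ^ 2 - 2 * (A * A) + A ^ 2 := by
      rw [norm_sub_sq_real, real_inner_smul_right, hzu, norm_smul, hu]
      rw [mul_one, Real.norm_eq_abs, sq_abs]
    rw [h3]
    nlinarith [norm_nonneg z]
  have hn2 : ‖v - t • u‖ ≤ Real.sqrt (1 - t ^ 2) := by
    rw [Real.le_sqrt (norm_nonneg _) ht2]
    have h3 : ‖v - t • u‖ ^ 2 = 1 - 2 * (t * t) + t ^ 2 := by
      rw [norm_sub_sq_real, real_inner_smul_right, real_inner_comm u v, ← ht,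
        norm_smul, hu, hv]
      rw [mul_one, Real.norm_eq_abs, sq_abs]
      norm_num
    rw [h3]
    nlinarith
  have hcs : |⟪z - A • u, v - t • u⟫| ≤ ‖z - A • u‖ * ‖v - t • u‖ :=
    abs_real_inner_le_norm _ _
  have hmul : ‖z - A • u‖ * ‖v - t • u‖ ≤ Real.sqrt (1 - A ^ 2) * Real.sqrt (1 - t ^ 2) :=
    mul_le_mul hn1 hn2 (norm_nonneg _) (Real.sqrt_nonneg _)
  have hfin : A * t - Real.sqrt (1 - A ^ 2) * Real.sqrt (1 - t ^ 2) ≤ ⟪z, v⟫ := by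
    have h5 := (abs_le.1 hcs).1
    rw [hid] at h5
    linarith
  have hgv : ⟪z, v⟫ ≤ N v := by rw [hzw]; exact hg2 v
  linarith

private lemma upper_sq' (a b t : ℝ) (ha : 1 ≤ a) (hb : 1 ≤ b) (ht : t ≤ 1) :
    2 - 2 * t ≤ a ^ 2 + b ^ 2 - 2 * (t * (a * b)) := by
  nlinarith [sq_nonneg (a - b), mul_nonneg (by nlinarith : (0:ℝ) ≤ a * b - 1)
    (by linarith : (0:ℝ) ≤ 1 - t)]

private lemma sq_le_one' (c : ℝ) (h0 : 0 ≤ c) (h1 : c ≤ 1) : (0:ℝ) ≤ 1 - c ^ 2 := by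
  nlinarith

set_option maxHeartbeats 2000000 in
theorem stmt18 (N : EuclideanSpace ℝ (Fin 2) → ℝ)
    (hN_add : ∀ v w, N (v + w) ≤ N v + N w)
    (hN_smul : ∀ (a : ℝ) (w : EuclideanSpace ℝ (Fin 2)), N (a • w) = |a| * N w)
    (hN_def : ∀ w, N w = 0 → w = 0)
    (hNE : ∀ w, N w ≤ ‖w‖)
    (K : ℝ) (hK : 1 ≤ K) (hKE : ∀ w, ‖w‖ ≤ K * N w) :
    Set.BijOn (fun w : EuclideanSpace ℝ (Fin 2) => ‖w‖⁻¹ • w) {w | N w = 1}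
        (Metric.sphere (0 : EuclideanSpace ℝ (Fin 2)) 1) ∧
      ∀ x y : EuclideanSpace ℝ (Fin 2), N x = 1 → N y = 1 →
        Real.arccos (⟪x, y⟫ / (‖x‖ * ‖y‖)) ≤ Real.arccos K⁻¹ →
        (1 / K ^ 2) * ‖x - y‖ ≤ ‖‖x‖⁻¹ • x - ‖y‖⁻¹ • y‖ ∧
          ‖‖x‖⁻¹ • x - ‖y‖⁻¹ • y‖ ≤ ‖x - y‖ := by
  have hN0 : N 0 = 0 := by simpa using hN_smul 0 0
  have hNneg : ∀ w, 0 ≤ N w := by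
    intro w
    have h1 := hN_add w (-w)
    have h2 : N (-w) = N w := by simpa using hN_smul (-1) w
    rw [add_neg_cancel, hN0, h2] at h1
    linarith
  have hpos : ∀ w : EuclideanSpace ℝ (Fin 2), N w = 1 → (0:ℝ) < ‖w‖ := by
    intro w hw
    rcases eq_or_ne w 0 with h | h
    · rw [h, hN0] at hw; norm_num at hw
    · exact norm_pos_iff.2 h
  constructor
  · refine ⟨?_, ?_, ?_⟩
    · intro w hw
      have hw' : N w = 1 := hw
      have h1 : (0:ℝ) < ‖w‖ := hpos w hw'
      simp only [mem_sphere_iff_norm, sub_zero, norm_smul, norm_inv, norm_norm]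
      exact inv_mul_cancel₀ h1.ne'
    · intro p hp q hq h
      have hp' : N p = 1 := hp
      have hq' : N q = 1 := hq
      have hnp : (0:ℝ) < ‖p‖ := hpos p hp'
      have hnq : (0:ℝ) < ‖q‖ := hpos q hq'
      have h2 : p = (‖p‖ * ‖q‖⁻¹) • q := by
        have h3 := congrArg (fun w : EuclideanSpace ℝ (Fin 2) => ‖p‖ • w) h
        simpa [smul_smul, mul_inv_cancel₀ hnp.ne'] using h3
      have hc : ‖p‖ * ‖q‖⁻¹ = 1 := by
        have h4 := hN_smul (‖p‖ * ‖q‖⁻¹) q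
        rw [← h2, hp', hq', mul_one] at h4
        rw [abs_of_pos (by positivity)] at h4
        linarith
      rw [h2, hc, one_smul]
    · intro w hw
      rw [mem_sphere_iff_norm, sub_zero] at hw
      have hw0 : w ≠ 0 := by intro h; rw [h, norm_zero] at hw; norm_num at hw
      have hNw : 0 < N w := by
        rcases (hNneg w).lt_or_eq with h | h
        · exact h
        · exact absurd (hN_def w h.symm) hw0
      refine ⟨(N w)⁻¹ • w, ?_, ?_⟩
      · show N ((N w)⁻¹ • w) = 1
        rw [hN_smul, abs_of_pos (inv_pos.2 hNw)]
        exact inv_mul_cancel₀ hNw.ne'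
      · show ‖(N w)⁻¹ • w‖⁻¹ • (N w)⁻¹ • w = w
        rw [norm_smul, norm_inv, Real.norm_eq_abs, abs_of_pos hNw, hw, mul_one,
          inv_inv, smul_smul, mul_inv_cancel₀ hNw.ne', one_smul]
  · intro x y hx hy _hang
    have ha1 : 1 ≤ ‖x‖ := by have := hNE x; rw [hx] at this; linarith
    have hb1 : 1 ≤ ‖y‖ := by have := hNE y; rw [hy] at this; linarith
    have haK : ‖x‖ ≤ K := by have := hKE x; rwa [hx, mul_one] at this
    have hbK : ‖y‖ ≤ K := by have := hKE y; rwa [hy, mul_one] at this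
    have ha0 : (0:ℝ) < ‖x‖ := by linarith
    have hb0 : (0:ℝ) < ‖y‖ := by linarith
    set u : EuclideanSpace ℝ (Fin 2) := ‖x‖⁻¹ • x with hu
    set v : EuclideanSpace ℝ (Fin 2) := ‖y‖⁻¹ • y with hv
    have hu1 : ‖u‖ = 1 := by
      rw [hu, norm_smul, norm_inv, norm_norm, inv_mul_cancel₀ ha0.ne']
    have hv1 : ‖v‖ = 1 := by
      rw [hv, norm_smul, norm_inv, norm_norm, inv_mul_cancel₀ hb0.ne']
    have hNu : N u = ‖x‖⁻¹ := by
      rw [hu, hN_smul, hx, mul_one, abs_of_pos (inv_pos.2 ha0)]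
    have hNv : N v = ‖y‖⁻¹ := by
      rw [hv, hN_smul, hy, mul_one, abs_of_pos (inv_pos.2 hb0)]
    have hxu : x = ‖x‖ • u := by
      rw [hu, smul_smul, mul_inv_cancel₀ ha0.ne', one_smul]
    have hyv : y = ‖y‖ • v := by
      rw [hv, smul_smul, mul_inv_cancel₀ hb0.ne', one_smul]
    set t : ℝ := ⟪u, v⟫ with ht
    have ht1 : |t| ≤ 1 := by
      have := abs_real_inner_le_norm u v
      rwa [hu1, hv1, one_mul] at this
    have htle : t ≤ 1 := (abs_le.1 ht1).2
    have htge : -1 ≤ t := (abs_le.1 ht1).1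
    have ht2 : (0:ℝ) ≤ 1 - t ^ 2 := by
      have := sq_le_one' |t| (abs_nonneg t) ht1
      rwa [sq_abs] at this
    have huv2 : ‖u - v‖ ^ 2 = 2 - 2 * t := by
      rw [norm_sub_sq_real, hu1, hv1, ← ht]; ring
    have hxyin : ⟪x, y⟫ = t * (‖x‖ * ‖y‖) := by
      conv_lhs => rw [hxu, hyv]
      rw [real_inner_smul_left, real_inner_smul_right, ← ht]; ring
    have hxy2 : ‖x - y‖ ^ 2 = ‖x‖ ^ 2 + ‖y‖ ^ 2 - 2 * (t * (‖x‖ * ‖y‖)) := by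
      rw [norm_sub_sq_real, hxyin]; ring
    -- the two support estimates
    have est1 := support_est N hN_add hN_smul hNE hNneg u v hu1 hv1
    have est2 := support_est N hN_add hN_smul hNE hNneg v u hv1 hu1
    rw [hNu, ← ht] at est1
    rw [hNv, real_inner_comm u v, ← ht] at est2
    rw [hNv] at est1
    rw [hNu] at est2
    set r : ℝ := Real.sqrt (1 - t ^ 2) with hrdef
    have hr0 : 0 ≤ r := Real.sqrt_nonneg _
    have hr2 : r ^ 2 = 1 - t ^ 2 := Real.sq_sqrt ht2
    -- q for y
    have hyi1 : ‖y‖⁻¹ ≤ 1 := by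
      rw [inv_le_one_iff₀]; right; linarith
    have hyi0 : (0:ℝ) ≤ ‖y‖⁻¹ := inv_nonneg.2 hb0.le
    have hyis : (0:ℝ) ≤ 1 - (‖y‖⁻¹) ^ 2 := sq_le_one' _ hyi0 hyi1
    have hxi1 : ‖x‖⁻¹ ≤ 1 := by
      rw [inv_le_one_iff₀]; right; linarith
    have hxi0 : (0:ℝ) ≤ ‖x‖⁻¹ := inv_nonneg.2 ha0.le
    have hxis : (0:ℝ) ≤ 1 - (‖x‖⁻¹) ^ 2 := sq_le_one' _ hxi0 hxi1
    set qy : ℝ := ‖y‖ * Real.sqrt (1 - (‖y‖⁻¹) ^ 2) with hqydef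
    have hqy0 : 0 ≤ qy := mul_nonneg hb0.le (Real.sqrt_nonneg _)
    have hqy2 : qy ^ 2 = ‖y‖ ^ 2 - 1 := by
      rw [hqydef, mul_pow, Real.sq_sqrt hyis]
      field_simp
    set qx : ℝ := ‖x‖ * Real.sqrt (1 - (‖x‖⁻¹) ^ 2) with hqxdef
    have hqx0 : 0 ≤ qx := mul_nonneg ha0.le (Real.sqrt_nonneg _)
    have hqx2 : qx ^ 2 = ‖x‖ ^ 2 - 1 := by
      rw [hqxdef, mul_pow, Real.sq_sqrt hxis]
      field_simp
    -- scaled estimates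
    have hd1 : ‖x‖ * t - ‖y‖ ≤ ‖x‖ * qy * r := by
      have h5 := mul_le_mul_of_nonneg_left est2 (by positivity : (0:ℝ) ≤ ‖x‖ * ‖y‖)
      have e1 : ‖x‖ * ‖y‖ * (‖y‖⁻¹ * t - Real.sqrt (1 - (‖y‖⁻¹) ^ 2) * r)
          = ‖x‖ * t - ‖x‖ * qy * r := by
        rw [hqydef]; field_simp
      have e2 : ‖x‖ * ‖y‖ * ‖x‖⁻¹ = ‖y‖ := by field_simp
      rw [e1, e2] at h5
      linarith
    have hd2 : ‖y‖ * t - ‖x‖ ≤ ‖y‖ * qx * r := by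
      have h5 := mul_le_mul_of_nonneg_left est1 (by positivity : (0:ℝ) ≤ ‖x‖ * ‖y‖)
      have e1 : ‖x‖ * ‖y‖ * (‖x‖⁻¹ * t - Real.sqrt (1 - (‖x‖⁻¹) ^ 2) * r)
          = ‖y‖ * t - ‖y‖ * qx * r := by
        rw [hqxdef]; field_simp
      have e2 : ‖x‖ * ‖y‖ * ‖y‖⁻¹ = ‖x‖ := by field_simp
      rw [e1, e2] at h5
      linarith
    have hcore : ‖x‖ ^ 2 + ‖y‖ ^ 2 - 2 * (t * (‖x‖ * ‖y‖)) ≤ K ^ 4 * (2 - 2 * t) := by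
      rcases le_total ‖y‖ ‖x‖ with h | h
      · exact core_ineq K ‖x‖ ‖y‖ t qy r hK ha1 haK hb1 hbK h htle htge hqy0 hqy2 hr0 hr2 hd1
      · have := core_ineq K ‖y‖ ‖x‖ t qx r hK hb1 hbK ha1 haK h htle htge hqx0 hqx2 hr0 hr2 hd2
        linarith [this]
    constructor
    · refine le_of_pow_le_pow_left₀ two_ne_zero (norm_nonneg _) ?_
      rw [mul_pow, hxy2, huv2]
      have hK4 : (0:ℝ) < K ^ 4 := by positivity
      have h8 := mul_le_mul_of_nonneg_left hcore (by positivity : (0:ℝ) ≤ (1 / K ^ 2) ^ 2)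
      have e3 : (1 / K ^ 2) ^ 2 * (K ^ 4 * (2 - 2 * t)) = 2 - 2 * t := by
        field_simp
      rw [e3] at h8
      exact h8
    · refine le_of_pow_le_pow_left₀ two_ne_zero (norm_nonneg _) ?_
      rw [hxy2, huv2]
      exact upper_sq' ‖x‖ ‖y‖ t ha1 hb1 htle
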